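/- Any non-simple cycle in a graph can, after a cyclic change of starting point, be written in reduced form: C = p · γ^k · P', where γ is a simple cycle, p is a simple path that is an initial segment of γ (possibly empty), k ≥ 1 is a positive integer, and P' is a path (possibly empty) whose first edge does not belong to γ. -/

import Mathlib

/-- `es` is a walk: the endpoint of each directed edge is the start of the next. -/
def IsWalk {V E : Type} (src tgt : E → V) (es : List E) : Prop :=
  es.Chain' (fun a b => tgt a = src b)

/-- `es` is closed: nonempty, and the endpoint of the last edge is the start of the first. -/
def IsClosedWalk {V E : Type} [Inhabited V] [Inhabited E] (src tgt : E → V) (es : List E) : Prop :=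
  es ≠ [] ∧ tgt es.getLast! = src es.head!

/-- The vertex sequence v₀, v₁, …, v_ℓ of a path (empty for the empty path). -/
def verts {V E : Type} (src tgt : E → V) (es : List E) : List V :=
  match es with
  | [] => []
  | e :: _ => src e :: es.map tgt

def IsCycle {V E : Type} [Inhabited V] [Inhabited E] (src tgt : E → V) (es : List E) : Prop :=
  IsWalk src tgt es ∧ IsClosedWalk src tgt es

/-- A simple path: all vertices v₀,…,v_ℓ are distinct. -/
def IsSimplePath {V E : Type} (src tgt : E → V) (es : List E) : Prop :=
  IsWalk src tgt es ∧ (verts src tgt es).Nodup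

/-- A simple cycle: a closed walk whose vertices are distinct except v₀ = v_ℓ. -/
def IsSimpleCycle {V E : Type} [Inhabited V] [Inhabited E] (src tgt : E → V) (es : List E) : Prop :=
  IsCycle src tgt es ∧ (es.map tgt).Nodup

namespace ReducedFormAux

variable {V E : Type} [Inhabited V] [Inhabited E] {src tgt : E → V}

lemma head!_eq {l : List E} (h : l ≠ []) : l.head! = l.head h := by
  cases l with
  | nil => exact absurd rfl h
  | cons a t => rfl

lemma getLast!_eq {l : List E} (h : l ≠ []) : l.getLast! = l.getLast h := by
  cases l with
  | nil => exact absurd rfl h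
  | cons a t => rfl

lemma head?_some {l : List E} (h : l ≠ []) : l.head? = some l.head! := by
  cases l with
  | nil => exact absurd rfl h
  | cons a t => rfl

lemma getLast?_some {l : List E} (h : l ≠ []) : l.getLast? = some l.getLast! := by
  rw [List.getLast?_eq_getLast_of_ne_nil h, getLast!_eq h]

lemma head!_append {a b : List E} (h : a ≠ []) : (a ++ b).head! = a.head! := by
  obtain ⟨x, t, rfl⟩ := List.exists_cons_of_ne_nil h; rfl

lemma getLast!_append {a b : List E} (h : b ≠ []) : (a ++ b).getLast! = b.getLast! := by
  have h2 : a ++ b ≠ [] := by simp [h]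
  rw [getLast!_eq h2, getLast!_eq h, List.getLast_append_of_ne_nil h2 h]

lemma closed_link {l : List E} (h : IsClosedWalk src tgt l) :
    ∀ x ∈ l.getLast?, ∀ y ∈ l.head?, tgt x = src y := by
  intro x hx y hy
  rw [getLast?_some h.1] at hx; rw [head?_some h.1] at hy
  simp only [Option.mem_def, Option.some.injEq] at hx hy
  rw [← hx, ← hy]; exact h.2

lemma cycle_append_comm {a b : List E} (h : IsCycle src tgt (a ++ b)) :
    IsCycle src tgt (b ++ a) := by
  rcases eq_or_ne a [] with rfl | ha
  · simpa using h
  rcases eq_or_ne b [] with rfl | hb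
  · simpa using h
  obtain ⟨hW, hcl⟩ := h
  obtain ⟨hwa, hwb, hlink⟩ := List.isChain_append.1 hW
  have hab : a ++ b ≠ [] := by simp [ha]
  have hba : b ++ a ≠ [] := by simp [ha]
  have hlink2 : tgt b.getLast! = src a.head! := by
    have := hcl.2
    rwa [getLast!_append hb, head!_append ha] at this
  constructor
  · exact List.isChain_append.2 ⟨hwb, hwa, by
      intro x hx y hy
      rw [getLast?_some hb] at hx; rw [head?_some ha] at hy
      simp only [Option.mem_def, Option.some.injEq] at hx hy
      rw [← hx, ← hy]; exact hlink2⟩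
  · refine ⟨hba, ?_⟩
    rw [getLast!_append ha, head!_append hb]
    exact hlink a.getLast! (getLast?_some ha) b.head! (head?_some hb)

lemma simpleCycle_append_comm {a b : List E} (h : IsSimpleCycle src tgt (a ++ b)) :
    IsSimpleCycle src tgt (b ++ a) := by
  refine ⟨cycle_append_comm h.1, ?_⟩
  have : ((a ++ b).map tgt).Perm ((b ++ a).map tgt) := by
    simp only [List.map_append]; exact List.perm_append_comm
  exact this.nodup h.2

lemma map_src_eq {l : List E} (hW : IsWalk src tgt l) (h : l ≠ []) :
    l.map src = src l.head! :: (l.map tgt).dropLast := by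
  induction l with
  | nil => exact absurd rfl h
  | cons a t ih =>
    cases t with
    | nil => simp
    | cons b t' =>
      obtain ⟨hab, hW'⟩ := List.isChain_cons_cons.1 hW
      have := ih hW' (by simp)
      simp only [List.map_cons] at this ⊢
      simp only [List.head!] at this
      rw [List.dropLast_cons₂, show (a :: b :: t').head! = a from rfl, hab]
      exact congrArg _ this

lemma src_nodup {γ : List E} (h : IsSimpleCycle src tgt γ) : (γ.map src).Nodup := by
  obtain ⟨⟨hW, hcl⟩, hnd⟩ := h
  have hne := hcl.1
  rw [map_src_eq hW hne]
  have hmne : γ.map tgt ≠ [] := by simpa using hne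
  have hsplit := List.dropLast_append_getLast hmne
  have hlast : (γ.map tgt).getLast hmne = tgt γ.getLast! := by
    rw [getLast!_eq hne, List.getLast_map]
  rw [← hsplit] at hnd
  have := List.nodup_append'.1 hnd
  refine List.nodup_cons.2 ⟨?_, this.1⟩
  intro hmem
  rw [← hcl.2] at hmem
  exact this.2.2 hmem (by simp [hlast])

lemma src_inj {γ : List E} (h : IsSimpleCycle src tgt γ) {e e' : E}
    (he : e ∈ γ) (he' : e' ∈ γ) (heq : src e = src e') : e = e' :=
  List.inj_on_of_nodup_map (src_nodup h) he he' heq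

lemma rep_succ (γ : List E) (k : ℕ) :
    (List.replicate (k + 1) γ).flatten = γ ++ (List.replicate k γ).flatten := by
  simp [List.replicate_succ]

lemma rep_comm (a b : List E) (k : ℕ) :
    (List.replicate k (a ++ b)).flatten ++ a = a ++ (List.replicate k (b ++ a)).flatten := by
  induction k with
  | zero => simp
  | succ n ih =>
    rw [rep_succ, rep_succ, List.append_assoc, List.append_assoc, ih]
    simp [List.append_assoc]

lemma rep_comm_self (γ : List E) (k : ℕ) :
    (List.replicate k γ).flatten ++ γ = γ ++ (List.replicate k γ).flatten := by
  have := rep_comm γ [] k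
  simpa using this

lemma rep_ne_nil {γ : List E} (hγ : γ ≠ []) (m : ℕ) :
    (List.replicate (m + 1) γ).flatten ≠ [] := by
  rw [rep_succ]; simp [hγ]

lemma rep_head! {γ : List E} (hγ : γ ≠ []) (m : ℕ) :
    ((List.replicate (m + 1) γ).flatten).head! = γ.head! := by
  rw [rep_succ, head!_append hγ]

lemma rep_getLast! {γ : List E} (hγ : γ ≠ []) (m : ℕ) :
    ((List.replicate (m + 1) γ).flatten).getLast! = γ.getLast! := by
  induction m with
  | zero => simp [rep_succ]
  | succ n ih =>
    rw [rep_succ (k := n + 1), getLast!_append (rep_ne_nil hγ n)]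
    exact ih

lemma head!_mem {l : List E} (h : l ≠ []) : l.head! ∈ l := by
  rw [head!_eq h]; exact List.head_mem h

lemma getLast!_mem {l : List E} (h : l ≠ []) : l.getLast! ∈ l := by
  rw [getLast!_eq h]; exact List.getLast_mem h

lemma stepB : ∀ (n : ℕ) (rest γ q : List E) (k : ℕ), rest.length ≤ n → 1 ≤ k →
    IsCycle src tgt ((List.replicate k γ).flatten ++ (q ++ rest)) →
    IsSimpleCycle src tgt γ →
    (∃ r, r ≠ [] ∧ γ = q ++ r) →
    ∃ (j : ℕ) (γ' P' : List E) (k' : ℕ), IsSimpleCycle src tgt γ' ∧ 1 ≤ k' ∧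
      ((List.replicate k γ).flatten ++ (q ++ rest)).rotate j
        = (List.replicate k' γ').flatten ++ P' ∧ (P' = [] ∨ P'.head! ∉ γ') := by
  intro n
  induction n with
  | zero =>
    intro rest γ q k hlen hk hcyc hsc hr
    obtain ⟨r, hrne, hγeq⟩ := hr
    have hrest : rest = [] := List.length_eq_zero_iff.1 (Nat.le_zero.1 hlen)
    subst hrest
    obtain ⟨m, rfl⟩ : ∃ m, k = m + 1 := ⟨k - 1, (Nat.succ_pred_eq_of_pos hk).symm⟩
    have hγne : γ ≠ [] := by rw [hγeq]; simp [hrne]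
    -- show q = []
    have hq : q = [] := by
      by_contra hq
      -- closedness of the whole cycle
      have hcl := hcyc.2
      have hwne : (List.replicate (m + 1) γ).flatten ++ (q ++ []) ≠ [] := by
        simp [hq]
      have hlastw : ((List.replicate (m + 1) γ).flatten ++ (q ++ [])).getLast! = q.getLast! := by
        rw [getLast!_append (by simp [hq])]
        simp
      have hheadw : ((List.replicate (m + 1) γ).flatten ++ (q ++ [])).head! = γ.head! := by
        rw [head!_append (rep_ne_nil hγne m), rep_head! hγne]
      have hA : tgt q.getLast! = src γ.head! := by
        have := hcl.2
        rwa [hlastw, hheadw] at this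
      -- chain of γ gives tgt q.getLast! = src r.head!
      have hWγ : IsWalk src tgt γ := hsc.1.1
      have hB : tgt q.getLast! = src r.head! := by
        rw [hγeq] at hWγ
        exact (List.isChain_append.1 hWγ).2.2 q.getLast! (getLast?_some hq) r.head! (head?_some hrne)
      have hqh : q.head! ∈ γ := by rw [hγeq]; exact List.mem_append_left _ (head!_mem hq)
      have hrh : r.head! ∈ γ := by rw [hγeq]; exact List.mem_append_right _ (head!_mem hrne)
      have hγh : γ.head! = q.head! := by rw [hγeq, head!_append hq]
      have heq2 : q.head! = r.head! := by
        refine src_inj hsc hqh hrh ?_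
        rw [← hγh, ← hA, hB]
      have hndE : γ.Nodup := List.Nodup.of_map tgt hsc.2
      rw [hγeq] at hndE
      have hdisj := List.disjoint_of_nodup_append hndE
      exact hdisj (head!_mem hq) (heq2 ▸ head!_mem hrne)
    subst hq
    exact ⟨0, γ, [], m + 1, hsc, hk, by simp, Or.inl rfl⟩
  | succ n ih =>
    intro rest γ q k hlen hk hcyc hsc hr
    obtain ⟨r, hrne, hγeq⟩ := hr
    obtain ⟨m, rfl⟩ : ∃ m, k = m + 1 := ⟨k - 1, (Nat.succ_pred_eq_of_pos hk).symm⟩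
    have hγne : γ ≠ [] := by rw [hγeq]; simp [hrne]
    cases rest with
    | nil =>
      -- same as base case: reuse via ih? just apply the zero-case by calling stepB? can't; redo via ih n with rest = [] impossible since ih needs length ≤ n, [] ok!
      exact ih [] γ q (m + 1) (by simp) hk hcyc hsc ⟨r, hrne, hγeq⟩
    | cons e rest' =>
      -- compute src e
      have hWw := hcyc.1
      have hw2 : IsWalk src tgt (((List.replicate (m + 1) γ).flatten ++ q) ++ (e :: rest')) := by
        rwa [List.append_assoc]
      have hAne : (List.replicate (m + 1) γ).flatten ++ q ≠ [] := by
        simp [rep_ne_nil hγne m]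
      have hlink := (List.isChain_append.1 hw2).2.2
      have hsrce : tgt ((List.replicate (m + 1) γ).flatten ++ q).getLast! = src e :=
        hlink _ (getLast?_some hAne) e rfl
      -- src e = src r.head!
      have hsrc : src e = src r.head! := by
        rcases eq_or_ne q [] with rfl | hq
        · have h1 : ((List.replicate (m + 1) γ).flatten ++ ([] : List E)).getLast! = γ.getLast! := by
            rw [List.append_nil, rep_getLast! hγne]
          have hclγ := hsc.1.2.2
          have : r = γ := by rw [hγeq]; rfl
          rw [← hsrce, h1, hclγ, this]
        · have h1 : ((List.replicate (m + 1) γ).flatten ++ q).getLast! = q.getLast! :=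
            getLast!_append hq
          have hWγ : IsWalk src tgt γ := hsc.1.1
          rw [hγeq] at hWγ
          have hB : tgt q.getLast! = src r.head! :=
            (List.isChain_append.1 hWγ).2.2 q.getLast! (getLast?_some hq) r.head! (head?_some hrne)
          rw [← hsrce, h1, hB]
      by_cases he : e = r.head!
      · -- continue along γ
        have hrdecomp : r = e :: r.tail := by
          rw [he, head!_eq hrne]
          exact (List.cons_head_tail hrne).symm
        rcases eq_or_ne r.tail [] with htail | htail
        · -- completed a full copy of γ
          have hγq : γ = q ++ [e] := by rw [hγeq, hrdecomp, htail]
          have hlist : (List.replicate (m + 1) γ).flatten ++ (q ++ e :: rest')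
              = (List.replicate (m + 2) γ).flatten ++ ([] ++ rest') := by
            have h2 : q ++ e :: rest' = γ ++ rest' := by rw [hγq]; simp
            rw [h2, rep_succ (k := m + 1), ← List.append_assoc, ← rep_comm_self,
              List.nil_append, List.append_assoc]
          rw [hlist] at hcyc ⊢
          exact ih rest' γ [] (m + 2) (by simpa using hlen) (by omega) hcyc hsc
            ⟨γ, hγne, rfl⟩
        · -- extend q
          have hγq : γ = (q ++ [e]) ++ r.tail := by rw [hγeq, hrdecomp]; simp
          have hlist : (List.replicate (m + 1) γ).flatten ++ (q ++ e :: rest')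
              = (List.replicate (m + 1) γ).flatten ++ ((q ++ [e]) ++ rest') := by simp
          rw [hlist] at hcyc ⊢
          exact ih rest' γ (q ++ [e]) (m + 1) (by simpa using hlen) hk hcyc hsc
            ⟨r.tail, htail, hγq⟩
      · -- e leaves γ
        have henotin : e ∉ γ := by
          intro hmem
          have hrh : r.head! ∈ γ := by rw [hγeq]; exact List.mem_append_right _ (head!_mem hrne)
          exact he (src_inj hsc hmem hrh hsrc)
        rcases eq_or_ne q [] with rfl | hq
        · refine ⟨0, γ, e :: rest', m + 1, hsc, hk, by simp, Or.inr ?_⟩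
          simpa using henotin
        · -- rotate by q.length
          refine ⟨q.length, r ++ q, (e :: rest') ++ q, m + 1, ?_, hk, ?_, Or.inr ?_⟩
          · exact simpleCycle_append_comm (hγeq ▸ hsc)
          · have hdecomp : (List.replicate (m + 1) γ).flatten ++ (q ++ e :: rest')
                = q ++ (r ++ ((List.replicate m γ).flatten ++ (q ++ e :: rest'))) := by
              rw [rep_succ, hγeq]; simp [List.append_assoc]
            rw [hdecomp, List.rotate_eq_drop_append_take (by simp),
              List.drop_left, List.take_left]
            have hrep : (List.replicate (m + 1) (r ++ q)).flatten
                = r ++ ((List.replicate m (q ++ r)).flatten ++ q) := by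
              rw [rep_succ, List.append_assoc, rep_comm]
            rw [hrep, ← hγeq]
            simp [List.append_assoc]
          · intro hmem
            have : e ∈ γ := by
              rw [hγeq]
              have : (e :: rest' ++ q).head! = e := rfl
              rw [this] at hmem
              exact (List.mem_append.2 (List.mem_append.1 hmem).symm)
            exact henotin this

lemma not_nodup_exists {α : Type} {l : List α} (h : ¬ l.Nodup) :
    ∃ (a b : ℕ) (_ : a < b) (_ : b < l.length), l[a]'(by omega) = l[b] := by
  rw [List.nodup_iff_injective_getElem] at h
  simp only [Function.Injective] at h
  push_neg at h
  obtain ⟨⟨a, ha⟩, ⟨b, hb⟩, heq, hne⟩ := h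
  rcases lt_or_gt_of_ne (by simpa using hne) with h' | h'
  · exact ⟨a, b, h', hb, heq⟩
  · exact ⟨b, a, h', ha, heq.symm⟩

lemma cycle_rotate {l : List E} (h : IsCycle src tgt l) (n : ℕ) :
    IsCycle src tgt (l.rotate n) := by
  have hne : l ≠ [] := h.2.1
  rw [← List.rotate_mod,
    List.rotate_eq_drop_append_take (le_of_lt (Nat.mod_lt _ (List.length_pos_iff.2 hne)))]
  exact cycle_append_comm (by rwa [List.take_append_drop])

lemma stepA' {C : List E} (hC : IsCycle src tgt C) :
    ∀ (d i j : ℕ) (hij : i < j) (hj : j < C.length), j - i ≤ d →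
      tgt (C[i]'(lt_trans hij hj)) = tgt C[j] →
      ∃ (i' : ℕ) (γ rest : List E), IsSimpleCycle src tgt γ ∧ C.rotate i' = γ ++ rest := by
  intro d
  induction d using Nat.strong_induction_on with
  | _ d ih =>
  intro i j hij hj hd heq
  have hchain : ∀ (t : ℕ) (h : t < C.length - 1), tgt (C[t]'(by omega)) = src (C[t+1]'(by omega)) := by
    have := List.isChain_iff_getElem.1 hC.1
    intro t ht
    simpa [List.get_eq_getElem] using this t (by omega)
  set seg := (C.drop (i + 1)).take (j - i) with hseg
  have hlen : seg.length = j - i := by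
    simp only [hseg, List.length_take, List.length_drop]
    omega
  have hsegne : seg ≠ [] := by
    have : 0 < seg.length := by omega
    exact List.ne_nil_of_length_pos this
  have hCget : ∀ (a : ℕ) (ha : a < j - i), seg[a]'(by omega) = C[i + 1 + a]'(by omega) := by
    intro a ha
    simp only [hseg, List.getElem_take, List.getElem_drop]
  have hwalk : IsWalk src tgt seg := by
    refine List.IsChain.infix hC.1 ?_
    exact (List.take_prefix _ _).isInfix.trans (List.drop_suffix _ _).isInfix
  have hhead : seg.head! = C[i + 1]'(by omega) := by
    rw [head!_eq hsegne, List.head_eq_getElem]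
    have := hCget 0 (by omega)
    simpa using this
  have hlast : seg.getLast! = C[j] := by
    rw [getLast!_eq hsegne, List.getLast_eq_getElem]
    have := hCget (j - i - 1) (by omega)
    simp only [show seg.length - 1 = j - i - 1 from by omega]
    rw [this]
    simp only [show i + 1 + (j - i - 1) = j from by omega]
  have hclosed : tgt seg.getLast! = src seg.head! := by
    rw [hlast, hhead, ← heq]
    exact hchain i (by omega)
  by_cases hnd : (seg.map tgt).Nodup
  · refine ⟨i + 1, seg, C.drop (j + 1) ++ C.take (i + 1), ⟨⟨hwalk, hsegne, hclosed⟩, hnd⟩, ?_⟩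
    have hdropsplit : C.drop (i + 1) = seg ++ C.drop (j + 1) := by
      conv_lhs => rw [← List.take_append_drop (j - i) (C.drop (i + 1))]
      rw [List.drop_drop]
      rw [show i + 1 + (j - i) = j + 1 from by omega]
    rw [List.rotate_eq_drop_append_take (by omega), hdropsplit, List.append_assoc]
  · obtain ⟨a, b, hab, hb, habeq⟩ := not_nodup_exists hnd
    simp only [List.length_map] at hb
    rw [List.getElem_map, List.getElem_map] at habeq
    rw [hCget a (by omega), hCget b (by omega)] at habeq
    refine ih (b - a) (by omega) (i + 1 + a) (i + 1 + b) (by omega) (by omega) (by omega) ?_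
    exact habeq

end ReducedFormAux

open ReducedFormAux in
/-- Any non-simple cycle can, after a cyclic change of starting point (`rotate j`),
be written in reduced form `C = p ++ γ^k ++ P'` where `γ` is a simple cycle, `p` is a
simple path that is an initial segment of `γ` (possibly empty), `k ≥ 1`, and `P'` is a
(possibly empty) path whose first edge does not belong to `γ`. -/
theorem reduced_form {V E : Type} [Inhabited V] [Inhabited E] (src tgt : E → V)
    (C : List E) (hC : IsCycle src tgt C) (hns : ¬ IsSimpleCycle src tgt C) :
    ∃ (j : ℕ) (p γ P' : List E) (k : ℕ),
      IsSimpleCycle src tgt γ ∧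
      IsSimplePath src tgt p ∧
      p <+: γ ∧
      1 ≤ k ∧
      C.rotate j = p ++ (List.replicate k γ).flatten ++ P' ∧
      (P' = [] ∨ P'.head! ∉ γ) := by
  classical
  have hdup : ¬ (C.map tgt).Nodup := fun hnd => hns ⟨hC, hnd⟩
  obtain ⟨a, b, hab, hb, habeq⟩ := not_nodup_exists hdup
  simp only [List.length_map] at hb
  rw [List.getElem_map, List.getElem_map] at habeq
  obtain ⟨i, γ, rest, hγ, hrot⟩ := stepA' hC (b - a) a b hab hb le_rfl habeq
  have hcyc' : IsCycle src tgt (C.rotate i) := cycle_rotate hC i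
  rw [hrot] at hcyc'
  have hcyc2 : IsCycle src tgt ((List.replicate 1 γ).flatten ++ ([] ++ rest)) := by
    simpa using hcyc'
  obtain ⟨j, γ', P', k', hγ', hk', hroteq, hP'⟩ :=
    stepB rest.length rest γ [] 1 le_rfl le_rfl hcyc2 hγ ⟨γ, hγ.1.2.1, rfl⟩
  refine ⟨i + j, [], γ', P', k', hγ', ⟨List.isChain_nil, by simp [verts]⟩,
    List.nil_prefix, hk', ?_, hP'⟩
  rw [← List.rotate_rotate, hrot,
    show γ ++ rest = (List.replicate 1 γ).flatten ++ ([] ++ rest) from by simp, hroteq]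
  simp
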